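/- In the pf-sLDA single-document setup, assume Z := ∑_{ξ : Fin N → Bool} q(ξ)·L(ξ) > 0 and that every vocabulary word appears in the document (∀ v, ∃ n, w n = v). Then the topics β and the additional topic π have disjoint supports (β k v · π v = 0 for all k and v) if and only if there exists a switch configuration ξ* : Fin N → Bool whose posterior probability is one, i.e., q(ξ*)·L(ξ*) = ∑_ξ q(ξ)·L(ξ). -/

import Mathlib

open MeasureTheory

/-- Theorem 2 of pf-sLDA: assuming positive total mass and that every
vocabulary word appears in the document, the topics `β` and the additional
topic `π` have disjoint supports iff the posterior over switch configurations
is a point mass at some configuration `ξ*`. -/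
theorem pfslda_disjoint_iff_point_mass
    (V K N : ℕ) (hV : 1 ≤ V) (hN : 1 ≤ N)
    (β : Fin K → Fin V → ℝ) (π : Fin V → ℝ)
    (hβnn : ∀ k v, 0 ≤ β k v) (hβsum : ∀ k, ∑ v, β k v = 1)
    (hπnn : ∀ v, 0 ≤ π v) (hπsum : ∑ v, π v = 1)
    (p : ℝ) (hp : p ∈ Set.Ioo (0 : ℝ) 1)
    (w : Fin N → Fin V)
    (μ : Measure (stdSimplex ℝ (Fin K))) [IsProbabilityMeasure μ]
    [μ.IsOpenPosMeasure]
    (f : stdSimplex ℝ (Fin K) → ℝ) (hf : Continuous f) (hfpos : ∀ θ, 0 < f θ)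
    (a : Fin N → stdSimplex ℝ (Fin K) → ℝ)
    (ha : ∀ n θ, a n θ = ∑ k, (θ : Fin K → ℝ) k * β k (w n))
    (q : (Fin N → Bool) → ℝ)
    (hq : ∀ ξ, q ξ = ∏ n, (if ξ n then p else 1 - p))
    (L : (Fin N → Bool) → ℝ)
    (hL : ∀ ξ, L ξ = ∫ θ, f θ * ∏ n, (if ξ n then a n θ else π (w n)) ∂μ)
    (hZpos : 0 < ∑ ξ : Fin N → Bool, q ξ * L ξ)
    (hall : ∀ v : Fin V, ∃ n, w n = v) :
    (∀ k v, β k v * π v = 0) ↔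
      ∃ ξstar : Fin N → Bool,
        q ξstar * L ξstar = ∑ ξ : Fin N → Bool, q ξ * L ξ := by
  obtain ⟨hp0, hp1⟩ := hp
  set g : (Fin N → Bool) → stdSimplex ℝ (Fin K) → ℝ :=
    fun ξ θ => f θ * ∏ n, (if ξ n then a n θ else π (w n)) with hgdef
  have hgapp : ∀ ξ θ, g ξ θ = f θ * ∏ n, (if ξ n then a n θ else π (w n)) :=
    fun ξ θ => rfl
  have ha_nonneg : ∀ n (θ : stdSimplex ℝ (Fin K)), 0 ≤ a n θ := fun n θ => by
    rw [ha]
    exact Finset.sum_nonneg fun j _ => mul_nonneg (θ.2.1 j) (hβnn j (w n))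
  have hg_nonneg : ∀ ξ θ, 0 ≤ g ξ θ := fun ξ θ =>
    mul_nonneg (hfpos θ).le (Finset.prod_nonneg fun n _ => by
      split
      · exact ha_nonneg n θ
      · exact hπnn (w n))
  have ha_cont : ∀ n, Continuous (a n) := by
    intro n
    have he : (a n) = fun θ : stdSimplex ℝ (Fin K) => ∑ j, (θ : Fin K → ℝ) j * β j (w n) :=
      funext (ha n)
    rw [he]
    exact continuous_finset_sum _ fun j _ =>
      ((continuous_apply j).comp continuous_subtype_val).mul continuous_const
  have hg_cont : ∀ ξ, Continuous (g ξ) := fun ξ =>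
    hf.mul (continuous_finset_prod _ fun n _ => by
      split
      · exact ha_cont n
      · exact continuous_const)
  have hg_int : ∀ ξ, Integrable (g ξ) μ := fun ξ => by
    have := (hg_cont ξ).continuousOn.integrableOn_compact (μ := μ) isCompact_univ
    simpa [IntegrableOn, Measure.restrict_univ] using this
  have hLg : ∀ ξ, L ξ = ∫ θ, g ξ θ ∂μ := fun ξ => hL ξ
  have hq_pos : ∀ ξ, 0 < q ξ := fun ξ => by
    rw [hq]
    refine Finset.prod_pos fun n _ => ?_
    split
    · exact hp0
    · linarith
  have hL_nonneg : ∀ ξ, 0 ≤ L ξ := fun ξ => by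
    rw [hLg]; exact integral_nonneg (hg_nonneg ξ)
  have hL_pos_of_point : ∀ ξ θ', 0 < g ξ θ' → 0 < L ξ := by
    intro ξ θ' hθ'
    rw [hLg]
    refine (integral_pos_iff_support_of_nonneg_ae
      (Filter.Eventually.of_forall (hg_nonneg ξ)) (hg_int ξ)).2 ?_
    have hU : IsOpen {θ | 0 < g ξ θ} := isOpen_lt continuous_const (hg_cont ξ)
    refine lt_of_lt_of_le (hU.measure_pos μ ⟨θ', hθ'⟩) (measure_mono ?_)
    intro θ hθ
    exact ne_of_gt hθ
  have h_exists_point : ∀ ξ, 0 < L ξ → ∃ θ', 0 < g ξ θ' := by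
    intro ξ hpos
    by_contra h
    push_neg at h
    have hz : ∀ θ', g ξ θ' = 0 := fun θ' => le_antisymm (h θ') (hg_nonneg ξ θ')
    rw [hLg] at hpos
    simp only [hz, integral_zero] at hpos
    exact lt_irrefl 0 hpos
  constructor
  · -- disjoint supports ⇒ point mass
    intro hdisj
    refine ⟨fun n => decide (π (w n) = 0), ?_⟩
    symm
    apply Finset.sum_eq_single
    · intro ξ _ hne
      have hmis : ∃ n, ξ n ≠ decide (π (w n) = 0) := by
        by_contra h
        push_neg at h
        exact hne (funext h)
      obtain ⟨n, hn⟩ := hmis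
      have hL0 : L ξ = 0 := by
        rw [hLg]
        have hzero : ∀ θ, g ξ θ = 0 := by
          intro θ
          rw [hgapp]
          have hfac0 : (if ξ n then a n θ else π (w n)) = 0 := by
            by_cases hπ0 : π (w n) = 0
            · have : ξ n = false := by
                cases hb : ξ n
                · rfl
                · exact absurd (by simp [hb, hπ0]) hn
              simp [this, hπ0]
            · have hb : ξ n = true := by
                cases hb : ξ n
                · exact absurd (by simp [hb, hπ0]) hn
                · rfl
              have hβ0 : ∀ j, β j (w n) = 0 := by
                intro j
                have := hdisj j (w n)
                rcases mul_eq_zero.1 this with h | h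
                · exact h
                · exact absurd h hπ0
              simp [hb, ha, hβ0]
          rw [Finset.prod_eq_zero (Finset.mem_univ n) hfac0, mul_zero]
        simp only [hzero, integral_zero]
      rw [hL0, mul_zero]
    · intro h
      exact absurd (Finset.mem_univ _) h
  · -- point mass ⇒ disjoint supports
    rintro ⟨ξs, hξs⟩ k v
    by_contra hne
    rw [mul_eq_zero] at hne
    push_neg at hne
    have hβpos : 0 < β k v := lt_of_le_of_ne (hβnn k v) (Ne.symm hne.1)
    have hπpos : 0 < π v := lt_of_le_of_ne (hπnn v) (Ne.symm hne.2)
    obtain ⟨n, hwn⟩ := hall v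
    have hLs_pos : 0 < L ξs := by
      rcases (hL_nonneg ξs).lt_or_eq with h | h
      · exact h
      · exfalso
        rw [← hξs, ← h, mul_zero] at hZpos
        exact lt_irrefl 0 hZpos
    obtain ⟨θ₀, hθ₀⟩ := h_exists_point ξs hLs_pos
    have hfac : ∀ m, 0 < (if ξs m then a m θ₀ else π (w m)) := by
      intro m
      by_contra hle
      push_neg at hle
      have h0 : (if ξs m then a m θ₀ else π (w m)) = 0 := by
        refine le_antisymm hle ?_
        split
        · exact ha_nonneg m θ₀
        · exact hπnn (w m)
      have : g ξs θ₀ = 0 := by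
        rw [hgapp, Finset.prod_eq_zero (Finset.mem_univ m) h0, mul_zero]
      rw [this] at hθ₀
      exact lt_irrefl 0 hθ₀
    set ξ' : Fin N → Bool := Function.update ξs n (!ξs n) with hξ'def
    have hξ'ne : ξ' ≠ ξs := by
      intro h
      have := congrFun h n
      simp [hξ'def, Function.update_self] at this
    have hξ'n : ξ' n = !ξs n := Function.update_self n _ _
    have hξ'm : ∀ m, m ≠ n → ξ' m = ξs m := fun m hm => Function.update_of_ne hm _ _
    have hsum0 : ∑ ξ ∈ Finset.univ.erase ξs, q ξ * L ξ = 0 := by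
      have h : q ξs * L ξs + ∑ ξ ∈ Finset.univ.erase ξs, q ξ * L ξ
          = ∑ ξ : Fin N → Bool, q ξ * L ξ :=
        Finset.add_sum_erase Finset.univ (fun ξ => q ξ * L ξ) (Finset.mem_univ ξs)
      linarith [hξs, h]
    have hterm0 : ∀ ξ ∈ Finset.univ.erase ξs, q ξ * L ξ = 0 :=
      (Finset.sum_eq_zero_iff_of_nonneg
        (fun ξ _ => mul_nonneg (hq_pos ξ).le (hL_nonneg ξ))).1 hsum0
    have hL'0 : L ξ' = 0 := by
      have h := hterm0 ξ' (Finset.mem_erase.2 ⟨hξ'ne, Finset.mem_univ _⟩)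
      rcases mul_eq_zero.1 h with h | h
      · exact absurd h (ne_of_gt (hq_pos ξ'))
      · exact h
    -- the mixed point
    have hmem : ((1:ℝ)/2) • (θ₀ : Fin K → ℝ) + ((1:ℝ)/2) • (Pi.single k 1 : Fin K → ℝ) ∈ stdSimplex ℝ (Fin K) :=
      convex_stdSimplex ℝ (Fin K) θ₀.2 (single_mem_stdSimplex ℝ k)
        (by norm_num) (by norm_num) (by norm_num)
    set θ₁ : stdSimplex ℝ (Fin K) := ⟨_, hmem⟩ with hθ₁def
    have hc : ∀ j, ((θ₁ : Fin K → ℝ) j) =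
        (1/2) * (θ₀ : Fin K → ℝ) j + (1/2) * (if j = k then (1:ℝ) else 0) := by
      intro j
      change (((1:ℝ)/2) • (θ₀ : Fin K → ℝ) + ((1:ℝ)/2) • (Pi.single k 1 : Fin K → ℝ)) j = _
      simp [hθ₁def, Pi.single_apply]
    have haθ₁ : ∀ m, a m θ₁ = (1/2) * a m θ₀ + (1/2) * β k (w m) := by
      intro m
      rw [ha, ha]
      have hterm : ∀ j : Fin K, (θ₁ : Fin K → ℝ) j * β j (w m)
          = (1/2) * ((θ₀ : Fin K → ℝ) j * β j (w m))
            + (if j = k then (1/2) * β j (w m) else 0) := by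
        intro j
        rw [hc j]
        by_cases h : j = k
        · subst h; simp; ring
        · simp [h]; ring
      rw [Finset.sum_congr rfl fun j _ => hterm j, Finset.sum_add_distrib, ← Finset.mul_sum,
        Finset.sum_ite_eq' Finset.univ k (fun j => (1/2) * β j (w m))]
      simp
    cases hb : ξs n with
    | true =>
      have hpos : 0 < g ξ' θ₀ := by
        rw [hgapp]
        refine mul_pos (hfpos θ₀) (Finset.prod_pos ?_)
        intro m _
        by_cases hm : m = n
        · rw [hm, hξ'n, hb]
          simpa [hwn] using hπpos
        · rw [hξ'm m hm]
          exact hfac m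
      have := hL_pos_of_point ξ' θ₀ hpos
      rw [hL'0] at this
      exact lt_irrefl 0 this
    | false =>
      have hpos : 0 < g ξ' θ₁ := by
        rw [hgapp]
        refine mul_pos (hfpos θ₁) (Finset.prod_pos ?_)
        intro m _
        by_cases hm : m = n
        · rw [hm, hξ'n, hb, Bool.not_false, if_pos rfl, haθ₁, hwn]
          nlinarith [ha_nonneg n θ₀, hβpos]
        · rw [hξ'm m hm]
          cases hbm : ξs m with
          | true =>
            rw [if_pos rfl, haθ₁]
            have h1 := hfac m
            rw [hbm] at h1
            simp only [if_true] at h1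
            nlinarith [hβnn k (w m)]
          | false =>
            rw [if_neg (by simp)]
            have h1 := hfac m
            rw [hbm] at h1
            simpa using h1
      have := hL_pos_of_point ξ' θ₁ hpos
      rw [hL'0] at this
      exact lt_irrefl 0 this
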